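/- Assume the unknown-input Weierstrass decomposition, unknown-input historical data, and unknown-input persistent excitation hypotheses, and assume the (n+p) × (n+q) block matrix [[E, F], [C, 0]] has rank n + q. If for every λ ∈ ℂ with |λ| ≥ 1 the rank over ℂ of col(λ·X_p − X_f, U_p, Y_p, Y_f) equals the rank of col(X_p, U_p, Y_f), then for every λ ∈ ℂ with |λ| ≥ 1 the rank over ℂ of the (n+p) × (n+q) block matrix [[λ·E − A, −F], [C, 0]] equals n + q. -/

import Mathlib

open Matrix

noncomputable section

/-- Data matrix of depth `T` whose `k`-th column is `f (k + off)`. -/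
def histMat {ι : Type} (T : ℕ) (f : ℕ → ι → ℝ) (off : ℕ) : Matrix ι (Fin T) ℝ :=
  Matrix.of fun i k => f ((k : ℕ) + off) i

/-- A real square matrix is Schur stable if every complex eigenvalue has modulus `< 1`. -/
def SchurStable {n : ℕ} (M : Matrix (Fin n) (Fin n) ℝ) : Prop :=
  ∀ μ ∈ spectrum ℂ (M.map (fun r : ℝ => (r : ℂ))), ‖μ‖ < 1

/-- View a real matrix as a complex matrix. -/
def cmap {a b : Type} (M : Matrix a b ℝ) : Matrix a b ℂ := M.map (fun r => (r : ℂ))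

-- extra generic lemmas -------------------------------------------------------

lemma cmap_eq_map {a b : Type} (M : Matrix a b ℝ) :
    cmap M = M.map ⇑Complex.ofRealHom := rfl

lemma full_col_rank_complex {a b : Type} [Fintype a] [Fintype b] [DecidableEq a] [DecidableEq b]
    (M : Matrix a b ℝ) (h : M.rank = Fintype.card b) :
    ∀ v : b → ℂ, cmap M *ᵥ v = 0 → v = 0 := by
  have hker : LinearMap.ker M.mulVecLin = ⊥ := by
    have h1 := LinearMap.finrank_range_add_finrank_ker M.mulVecLin
    rw [show Module.finrank ℝ (b → ℝ) = Fintype.card b from Module.finrank_pi ℝ] at h1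
    rw [Matrix.rank] at h
    have : Module.finrank ℝ (LinearMap.ker M.mulVecLin) = 0 := by omega
    exact Submodule.finrank_eq_zero.mp this
  obtain ⟨g, hg⟩ := LinearMap.exists_leftInverse_of_injective M.mulVecLin hker
  set L := LinearMap.toMatrix' g with hL
  have hLM : L * M = 1 := by
    have h2 : LinearMap.toMatrix' (g.comp M.mulVecLin)
        = LinearMap.toMatrix' (LinearMap.id (R := ℝ) (M := b → ℝ)) := by rw [hg]
    rwa [LinearMap.toMatrix'_comp, LinearMap.toMatrix'_id,
      show M.mulVecLin = Matrix.toLin' M from rfl, LinearMap.toMatrix'_toLin'] at h2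
  intro v hv
  have h3 : (cmap L * cmap M) *ᵥ v = 0 := by
    rw [← Matrix.mulVec_mulVec, hv, Matrix.mulVec_zero]
  have h4 : cmap (L * M) = cmap L * cmap M := by
    funext i j; simp [cmap, Matrix.mul_apply]
  rwa [← h4, hLM, show cmap (1 : Matrix b b ℝ) = 1 by
    funext i j; by_cases hij : i = j <;> simp [cmap, Matrix.one_apply, hij],
    Matrix.one_mulVec] at h3

lemma full_row_rank_complex {a b : Type} [Fintype a] [Fintype b] [DecidableEq a] [DecidableEq b]
    (M : Matrix a b ℝ) (h : M.rank = Fintype.card a) :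
    Function.Surjective (cmap M).mulVecLin := by
  have hrg : LinearMap.range M.mulVecLin = ⊤ := by
    apply Submodule.eq_top_of_finrank_eq
    rw [← Matrix.rank, h, Module.finrank_pi]
  obtain ⟨g, hg⟩ := LinearMap.exists_rightInverse_of_surjective M.mulVecLin hrg
  set Rm := LinearMap.toMatrix' g with hRm
  have hMR : M * Rm = 1 := by
    have h2 : LinearMap.toMatrix' (M.mulVecLin.comp g)
        = LinearMap.toMatrix' (LinearMap.id (R := ℝ) (M := a → ℝ)) := by rw [hg]
    rwa [LinearMap.toMatrix'_comp, LinearMap.toMatrix'_id,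
      show M.mulVecLin = Matrix.toLin' M from rfl, LinearMap.toMatrix'_toLin'] at h2
  intro w
  refine ⟨cmap Rm *ᵥ w, ?_⟩
  have h4 : cmap (M * Rm) = cmap M * cmap Rm := by
    funext i j; simp [cmap, Matrix.mul_apply]
  rw [Matrix.mulVecLin_apply, Matrix.mulVec_mulVec, ← h4, hMR, show cmap (1 : Matrix a a ℝ) = 1 by
    funext i j; by_cases hij : i = j <;> simp [cmap, Matrix.one_apply, hij],
    Matrix.one_mulVec]

namespace Stmt16

abbrev Idx (n1 s m q : ℕ) : Type := Fin n1 ⊕ (Fin (s+1) × (Fin m ⊕ Fin q))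

variable {n1 n2 s m p q : ℕ}

def rv {α : Type} (v : α → ℝ) : α → ℂ := fun i => (v i : ℂ)

lemma rv_add {α : Type} (v w : α → ℝ) : rv (v + w) = rv v + rv w := by
  funext i; simp [rv]

lemma rv_neg {α : Type} (v : α → ℝ) : rv (-v) = - rv v := by
  funext i; simp [rv]

lemma cmap_mulVec_rv {a b : Type} [Fintype b] (M : Matrix a b ℝ) (v : b → ℝ) :
    cmap M *ᵥ rv v = rv (M *ᵥ v) := by
  funext i
  simp [cmap, rv, Matrix.mulVec, dotProduct]

lemma mulVec_sumF {a b : Type} [Fintype b] {γ : Type} (t : Finset γ)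
    (M : Matrix a b ℂ) (f : γ → b → ℂ) :
    M *ᵥ (∑ j ∈ t, f j) = ∑ j ∈ t, M *ᵥ f j := by
  simp only [← Matrix.mulVecLin_apply]
  exact map_sum M.mulVecLin f t

def z1c (w : Idx n1 s m q → ℂ) : Fin n1 → ℂ := fun i => w (Sum.inl i)

def uN (w : Idx n1 s m q → ℂ) (j : ℕ) : Fin m → ℂ :=
  if h : j < s + 1 then (fun i => w (Sum.inr (⟨j, h⟩, Sum.inl i))) else 0

def eN (w : Idx n1 s m q → ℂ) (j : ℕ) : Fin q → ℂ :=
  if h : j < s + 1 then (fun i => w (Sum.inr (⟨j, h⟩, Sum.inr i))) else 0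

def z2c (R : Matrix (Fin n2) (Fin n2) ℂ) (B2 : Matrix (Fin n2) (Fin m) ℂ)
    (F2 : Matrix (Fin n2) (Fin q) ℂ) (w : Idx n1 s m q → ℂ) : Fin n2 → ℂ :=
  -(∑ j ∈ Finset.range s, R ^ j *ᵥ (B2 *ᵥ uN w j + F2 *ᵥ eN w j))

def z2c' (R : Matrix (Fin n2) (Fin n2) ℂ) (B2 : Matrix (Fin n2) (Fin m) ℂ)
    (F2 : Matrix (Fin n2) (Fin q) ℂ) (w : Idx n1 s m q → ℂ) : Fin n2 → ℂ :=
  -(∑ j ∈ Finset.range s, R ^ j *ᵥ (B2 *ᵥ uN w (j+1) + F2 *ᵥ eN w (j+1)))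

def z1c' (A1 : Matrix (Fin n1) (Fin n1) ℂ) (B1 : Matrix (Fin n1) (Fin m) ℂ)
    (F1 : Matrix (Fin n1) (Fin q) ℂ) (w : Idx n1 s m q → ℂ) : Fin n1 → ℂ :=
  A1 *ᵥ z1c w + B1 *ᵥ uN w 0 + F1 *ᵥ eN w 0

/-- combine a slow/fast pair into an `Fin (n1+n2)` indexed vector -/
def cmb (a : Fin n1 → ℂ) (b : Fin n2 → ℂ) : Fin (n1 + n2) → ℂ :=
  fun i => Sum.elim a b (finSumFinEquiv.symm i)

lemma cmb_add (a a' : Fin n1 → ℂ) (b b' : Fin n2 → ℂ) :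
    cmb (a + a') (b + b') = cmb a b + cmb a' b' := by
  funext i
  simp only [cmb, Pi.add_apply]
  cases finSumFinEquiv.symm i <;> simp

lemma cmb_smul (c : ℂ) (a : Fin n1 → ℂ) (b : Fin n2 → ℂ) :
    cmb (c • a) (c • b) = c • cmb a b := by
  funext i
  simp only [cmb, Pi.smul_apply]
  cases finSumFinEquiv.symm i <;> simp

lemma cmb_eq_zero_iff {a : Fin n1 → ℂ} {b : Fin n2 → ℂ} :
    cmb a b = 0 ↔ a = 0 ∧ b = 0 := by
  constructor
  · intro h
    constructor
    · funext i
      have := congrFun h (finSumFinEquiv (Sum.inl i))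
      simpa [cmb] using this
    · funext i
      have := congrFun h (finSumFinEquiv (Sum.inr i))
      simpa [cmb] using this
  · rintro ⟨rfl, rfl⟩
    funext i
    simp only [cmb]
    cases finSumFinEquiv.symm i <;> simp

def xc (R : Matrix (Fin n2) (Fin n2) ℂ) (B2 : Matrix (Fin n2) (Fin m) ℂ)
    (F2 : Matrix (Fin n2) (Fin q) ℂ) (P : Matrix (Fin (n1+n2)) (Fin (n1+n2)) ℂ)
    (w : Idx n1 s m q → ℂ) : Fin (n1+n2) → ℂ :=
  P *ᵥ cmb (z1c w) (z2c R B2 F2 w)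

def xc' (A1 : Matrix (Fin n1) (Fin n1) ℂ) (R : Matrix (Fin n2) (Fin n2) ℂ)
    (B1 : Matrix (Fin n1) (Fin m) ℂ) (B2 : Matrix (Fin n2) (Fin m) ℂ)
    (F1 : Matrix (Fin n1) (Fin q) ℂ) (F2 : Matrix (Fin n2) (Fin q) ℂ)
    (P : Matrix (Fin (n1+n2)) (Fin (n1+n2)) ℂ)
    (w : Idx n1 s m q → ℂ) : Fin (n1+n2) → ℂ :=
  P *ᵥ cmb (z1c' A1 B1 F1 w) (z2c' R B2 F2 w)

section Gmaps

variable (A1 : Matrix (Fin n1) (Fin n1) ℂ) (R : Matrix (Fin n2) (Fin n2) ℂ)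
  (B1 : Matrix (Fin n1) (Fin m) ℂ) (B2 : Matrix (Fin n2) (Fin m) ℂ)
  (F1 : Matrix (Fin n1) (Fin q) ℂ) (F2 : Matrix (Fin n2) (Fin q) ℂ)
  (P : Matrix (Fin (n1+n2)) (Fin (n1+n2)) ℂ) (C : Matrix (Fin p) (Fin (n1+n2)) ℂ)

def g1f (lam : ℂ) (w : Idx n1 s m q → ℂ) :
    (Fin (n1+n2) ⊕ (Fin m ⊕ (Fin p ⊕ Fin p))) → ℂ :=
  Sum.elim (lam • xc R B2 F2 P w - xc' A1 R B1 B2 F1 F2 P w)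
    (Sum.elim (uN w 0)
      (Sum.elim (C *ᵥ xc R B2 F2 P w) (C *ᵥ xc' A1 R B1 B2 F1 F2 P w)))

def g2f (w : Idx n1 s m q → ℂ) :
    (Fin (n1+n2) ⊕ (Fin m ⊕ Fin p)) → ℂ :=
  Sum.elim (xc R B2 F2 P w)
    (Sum.elim (uN w 0) (C *ᵥ xc' A1 R B1 B2 F1 F2 P w))

-- linearity of the building blocks
lemma z1c_add (w w' : Idx n1 s m q → ℂ) : z1c (w + w') = z1c w + z1c w' := rfl

lemma z1c_smul (c : ℂ) (w : Idx n1 s m q → ℂ) : z1c (c • w) = c • z1c w := rfl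

lemma uN_add (w w' : Idx n1 s m q → ℂ) (j : ℕ) : uN (w + w') j = uN w j + uN w' j := by
  by_cases h : j < s + 1 <;> simp [uN, h] <;> rfl

lemma uN_smul (c : ℂ) (w : Idx n1 s m q → ℂ) (j : ℕ) : uN (c • w) j = c • uN w j := by
  by_cases h : j < s + 1 <;> simp [uN, h] <;> rfl

lemma eN_add (w w' : Idx n1 s m q → ℂ) (j : ℕ) : eN (w + w') j = eN w j + eN w' j := by
  by_cases h : j < s + 1 <;> simp [eN, h] <;> rfl

lemma eN_smul (c : ℂ) (w : Idx n1 s m q → ℂ) (j : ℕ) : eN (c • w) j = c • eN w j := by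
  by_cases h : j < s + 1 <;> simp [eN, h] <;> rfl

lemma z2c_add (w w' : Idx n1 s m q → ℂ) :
    z2c R B2 F2 (w + w') = z2c R B2 F2 w + z2c R B2 F2 w' := by
  simp [z2c, uN_add, eN_add, Matrix.mulVec_add, Finset.sum_add_distrib, neg_add]
  abel

lemma z2c_smul (c : ℂ) (w : Idx n1 s m q → ℂ) :
    z2c R B2 F2 (c • w) = c • z2c R B2 F2 w := by
  simp only [z2c, uN_smul, eN_smul, Matrix.mulVec_smul, ← smul_add, ← Finset.smul_sum,
    ← smul_neg]

lemma z2c'_add (w w' : Idx n1 s m q → ℂ) :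
    z2c' R B2 F2 (w + w') = z2c' R B2 F2 w + z2c' R B2 F2 w' := by
  simp [z2c', uN_add, eN_add, Matrix.mulVec_add, Finset.sum_add_distrib, neg_add]
  abel

lemma z2c'_smul (c : ℂ) (w : Idx n1 s m q → ℂ) :
    z2c' R B2 F2 (c • w) = c • z2c' R B2 F2 w := by
  simp only [z2c', uN_smul, eN_smul, Matrix.mulVec_smul, ← smul_add, ← Finset.smul_sum,
    ← smul_neg]

lemma z1c'_add (w w' : Idx n1 s m q → ℂ) :
    z1c' A1 B1 F1 (w + w') = z1c' A1 B1 F1 w + z1c' A1 B1 F1 w' := by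
  simp [z1c', z1c_add, uN_add, eN_add, Matrix.mulVec_add]
  abel

lemma z1c'_smul (c : ℂ) (w : Idx n1 s m q → ℂ) :
    z1c' A1 B1 F1 (c • w) = c • z1c' A1 B1 F1 w := by
  simp [z1c', z1c_smul, uN_smul, eN_smul, Matrix.mulVec_smul, smul_add]

lemma xc_add (w w' : Idx n1 s m q → ℂ) :
    xc R B2 F2 P (w + w') = xc R B2 F2 P w + xc R B2 F2 P w' := by
  simp [xc, z1c_add, z2c_add, cmb_add, Matrix.mulVec_add]

lemma xc_smul (c : ℂ) (w : Idx n1 s m q → ℂ) :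
    xc R B2 F2 P (c • w) = c • xc R B2 F2 P w := by
  simp [xc, z1c_smul, z2c_smul, cmb_smul, Matrix.mulVec_smul]

lemma xc'_add (w w' : Idx n1 s m q → ℂ) :
    xc' A1 R B1 B2 F1 F2 P (w + w') = xc' A1 R B1 B2 F1 F2 P w + xc' A1 R B1 B2 F1 F2 P w' := by
  simp [xc', z1c'_add, z2c'_add, cmb_add, Matrix.mulVec_add]

lemma xc'_smul (c : ℂ) (w : Idx n1 s m q → ℂ) :
    xc' A1 R B1 B2 F1 F2 P (c • w) = c • xc' A1 R B1 B2 F1 F2 P w := by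
  simp [xc', z1c'_smul, z2c'_smul, cmb_smul, Matrix.mulVec_smul]

lemma sumElim_add {α β : Type} (a a' : α → ℂ) (b b' : β → ℂ) :
    (Sum.elim (a + a') (b + b') : α ⊕ β → ℂ) = Sum.elim a b + Sum.elim a' b' := by
  funext i; cases i <;> simp

lemma sumElim_smul {α β : Type} (c : ℂ) (a : α → ℂ) (b : β → ℂ) :
    (Sum.elim (c • a) (c • b) : α ⊕ β → ℂ) = c • Sum.elim a b := by
  funext i; cases i <;> simp

/-- `g1f` as a linear map. -/
def g1L (lam : ℂ) : ((Idx n1 s m q → ℂ) →ₗ[ℂ] ((Fin (n1+n2) ⊕ (Fin m ⊕ (Fin p ⊕ Fin p))) → ℂ)) :=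
  { toFun := g1f A1 R B1 B2 F1 F2 P C lam
    map_add' := by
      intro w w'
      funext i
      rcases i with i | (i | (i | i)) <;>
        simp [g1f, xc_add, xc'_add, uN_add, Matrix.mulVec_add] <;> ring
    map_smul' := by
      intro c w
      funext i
      rcases i with i | (i | (i | i)) <;>
        simp [g1f, xc_smul, xc'_smul, uN_smul, Matrix.mulVec_smul] <;> ring }

/-- `g2f` as a linear map. -/
def g2L : ((Idx n1 s m q → ℂ) →ₗ[ℂ] ((Fin (n1+n2) ⊕ (Fin m ⊕ Fin p)) → ℂ)) :=
  { toFun := g2f A1 R B1 B2 F1 F2 P C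
    map_add' := by
      intro w w'
      funext i
      rcases i with i | (i | i) <;>
        simp [g2f, xc_add, xc'_add, uN_add, Matrix.mulVec_add]
    map_smul' := by
      intro c w
      funext i
      rcases i with i | (i | i) <;>
        simp [g2f, xc_smul, xc'_smul, uN_smul, Matrix.mulVec_smul] }

/-- Key shift identity. -/
lemma key_shift (hRs : R ^ s = 0) (w : Idx n1 s m q → ℂ) :
    R *ᵥ z2c' R B2 F2 w = z2c R B2 F2 w + (B2 *ᵥ uN w 0 + F2 *ᵥ eN w 0) := by
  set g : ℕ → (Fin n2 → ℂ) := fun j => B2 *ᵥ uN w j + F2 *ᵥ eN w j with hg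
  have h1 : R *ᵥ z2c' R B2 F2 w = -(∑ j ∈ Finset.range s, R ^ (j+1) *ᵥ g (j+1)) := by
    rw [z2c', Matrix.mulVec_neg, mulVec_sumF]
    congr 1
    refine Finset.sum_congr rfl fun j _ => ?_
    rw [Matrix.mulVec_mulVec, ← pow_succ']
  have h2 : ∑ j ∈ Finset.range (s+1), R ^ j *ᵥ g j
      = (∑ j ∈ Finset.range s, R ^ (j+1) *ᵥ g (j+1)) + R ^ 0 *ᵥ g 0 :=
    Finset.sum_range_succ' _ s
  have h3 : ∑ j ∈ Finset.range (s+1), R ^ j *ᵥ g j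
      = (∑ j ∈ Finset.range s, R ^ j *ᵥ g j) + R ^ s *ᵥ g s :=
    Finset.sum_range_succ _ s
  have h4 : (∑ j ∈ Finset.range s, R ^ (j+1) *ᵥ g (j+1))
      = (∑ j ∈ Finset.range s, R ^ j *ᵥ g j) - g 0 := by
    have := h2.symm.trans h3
    rw [hRs, Matrix.zero_mulVec, add_zero] at this
    rw [← this, pow_zero, Matrix.one_mulVec]
    abel
  rw [h1, h4, z2c]
  simp only [hg]
  abel

/-- Unrolling the fast equation. -/
lemma unroll (lam : ℂ) (hRs : R ^ s = 0) (z : Fin n2 → ℂ) (v : Fin n2 → ℂ)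
    (h : lam • (R *ᵥ z) - z = v) :
    z = -(∑ j ∈ Finset.range s, lam ^ j • (R ^ j *ᵥ v)) := by
  have key : ∀ t : ℕ, z = -(∑ j ∈ Finset.range t, lam ^ j • (R ^ j *ᵥ v))
      + lam ^ t • (R ^ t *ᵥ z) := by
    intro t
    induction t with
    | zero => simp
    | succ t ih =>
      have hz : z = lam • (R *ᵥ z) - v := by rw [← h]; abel
      have step : lam ^ t • (R ^ t *ᵥ z)
          = lam ^ (t+1) • (R ^ (t+1) *ᵥ z) - lam ^ t • (R ^ t *ᵥ v) := by
        conv_lhs => rw [hz]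
        rw [Matrix.mulVec_sub, Matrix.mulVec_smul, Matrix.mulVec_mulVec, ← pow_succ,
          smul_sub, smul_smul, ← pow_succ]
      conv_lhs => rw [ih]
      rw [step, Finset.sum_range_succ]
      abel
  have := key s
  rwa [hRs, Matrix.zero_mulVec, smul_zero, add_zero] at this

end Gmaps

-- additional cmb / rv / cmap lemmas
lemma cmb_sub (a a' : Fin n1 → ℂ) (b b' : Fin n2 → ℂ) :
    cmb (a - a') (b - b') = cmb a b - cmb a' b' := by
  funext i
  simp only [cmb, Pi.sub_apply]
  cases finSumFinEquiv.symm i <;> simp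

lemma cmb_zero : (cmb (0 : Fin n1 → ℂ) (0 : Fin n2 → ℂ)) = 0 :=
  cmb_eq_zero_iff.mpr ⟨rfl, rfl⟩

lemma cmb_inj {a a' : Fin n1 → ℂ} {b b' : Fin n2 → ℂ} (h : cmb a b = cmb a' b') :
    a = a' ∧ b = b' := by
  have h0 : cmb (a - a') (b - b') = 0 := by rw [cmb_sub, h, sub_self]
  obtain ⟨h1, h2⟩ := cmb_eq_zero_iff.mp h0
  exact ⟨sub_eq_zero.mp h1, sub_eq_zero.mp h2⟩

lemma cmb_rv (a : Fin n1 → ℝ) (b : Fin n2 → ℝ) :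
    cmb (rv a) (rv b) = rv (fun i => Sum.elim a b (finSumFinEquiv.symm i)) := by
  funext i
  simp only [cmb, rv]
  cases finSumFinEquiv.symm i <;> rfl

lemma rv_sum {α : Type} {γ : Type} (t : Finset γ) (f : γ → α → ℝ) :
    rv (∑ j ∈ t, f j) = ∑ j ∈ t, rv (f j) := by
  funext i
  simp [rv, Finset.sum_apply]

lemma cmap_zero {a b : Type} : cmap (0 : Matrix a b ℝ) = 0 := by
  funext i j; simp [cmap]

lemma cmap_mul' {a b c : Type} [Fintype b] (M : Matrix a b ℝ) (N : Matrix b c ℝ) :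
    cmap (M * N) = cmap M * cmap N := by
  funext i j
  simp [cmap, Matrix.mul_apply]

lemma cmap_one' {a : Type} [Fintype a] [DecidableEq a] :
    cmap (1 : Matrix a a ℝ) = 1 := by
  funext i j
  by_cases h : i = j <;> simp [cmap, Matrix.one_apply, h]

lemma cmap_pow {a : ℕ} (M : Matrix (Fin a) (Fin a) ℝ) (j : ℕ) :
    cmap (M ^ j) = (cmap M) ^ j := by
  induction j with
  | zero => simpa using cmap_one'
  | succ t ih => rw [pow_succ, pow_succ, cmap_mul', ih]

lemma cmap_submatrix {a b c d : Type} (M : Matrix a b ℝ) (e : c → a) (f : d → b) :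
    cmap (M.submatrix e f) = (cmap M).submatrix e f := rfl

lemma cmap_fromBlocks {a b c d : Type}
    (M11 : Matrix a c ℝ) (M12 : Matrix a d ℝ) (M21 : Matrix b c ℝ) (M22 : Matrix b d ℝ) :
    cmap (Matrix.fromBlocks M11 M12 M21 M22)
      = Matrix.fromBlocks (cmap M11) (cmap M12) (cmap M21) (cmap M22) := by
  funext i j
  cases i <;> cases j <;> rfl

lemma cmap_fromRows {a b c : Type} (M1 : Matrix a c ℝ) (M2 : Matrix b c ℝ) :
    cmap (Matrix.fromRows M1 M2) = Matrix.fromRows (cmap M1) (cmap M2) := by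
  funext i j
  cases i <;> rfl

lemma cmap_fromColumns {a b c : Type} (M1 : Matrix a b ℝ) (M2 : Matrix a c ℝ) :
    cmap (Matrix.fromCols M1 M2) = Matrix.fromCols (cmap M1) (cmap M2) := by
  funext i j
  cases j <;> rfl

-- mulVec through the sum-index identification
lemma blocksmul (M11 : Matrix (Fin n1) (Fin n1) ℂ) (M12 : Matrix (Fin n1) (Fin n2) ℂ)
    (M21 : Matrix (Fin n2) (Fin n1) ℂ) (M22 : Matrix (Fin n2) (Fin n2) ℂ)
    (a : Fin n1 → ℂ) (b : Fin n2 → ℂ) :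
    ((Matrix.fromBlocks M11 M12 M21 M22).submatrix
        ⇑(finSumFinEquiv (m := n1) (n := n2)).symm ⇑finSumFinEquiv.symm) *ᵥ cmb a b
      = cmb (M11 *ᵥ a + M12 *ᵥ b) (M21 *ᵥ a + M22 *ᵥ b) := by
  funext i
  have h := Equiv.sum_comp (finSumFinEquiv (m := n1) (n := n2)).symm
    (fun j' => Matrix.fromBlocks M11 M12 M21 M22 (finSumFinEquiv.symm i) j' * Sum.elim a b j')
  calc (((Matrix.fromBlocks M11 M12 M21 M22).submatrix
        ⇑finSumFinEquiv.symm ⇑finSumFinEquiv.symm) *ᵥ cmb a b) i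
      = ∑ j, Matrix.fromBlocks M11 M12 M21 M22 (finSumFinEquiv.symm i) (finSumFinEquiv.symm j)
          * Sum.elim a b (finSumFinEquiv.symm j) := rfl
    _ = ∑ j', Matrix.fromBlocks M11 M12 M21 M22 (finSumFinEquiv.symm i) j' * Sum.elim a b j' := h
    _ = (Matrix.fromBlocks M11 M12 M21 M22 *ᵥ Sum.elim a b) (finSumFinEquiv.symm i) := rfl
    _ = cmb (M11 *ᵥ a + M12 *ᵥ b) (M21 *ᵥ a + M22 *ᵥ b) i := by
        rw [Matrix.fromBlocks_mulVec]; rfl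

lemma rowsmul (N1 : Matrix (Fin n1) (Fin q) ℂ) (N2 : Matrix (Fin n2) (Fin q) ℂ)
    (v : Fin q → ℂ) :
    ((Matrix.fromRows N1 N2).submatrix ⇑(finSumFinEquiv (m := n1) (n := n2)).symm id) *ᵥ v
      = cmb (N1 *ᵥ v) (N2 *ᵥ v) := by
  funext i
  calc (((Matrix.fromRows N1 N2).submatrix ⇑finSumFinEquiv.symm id) *ᵥ v) i
      = (Matrix.fromRows N1 N2 *ᵥ v) (finSumFinEquiv.symm i) := rfl
    _ = cmb (N1 *ᵥ v) (N2 *ᵥ v) i := by rw [Matrix.fromRows_mulVec]; rfl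

lemma colsmul (N1 : Matrix (Fin p) (Fin n1) ℂ) (N2 : Matrix (Fin p) (Fin n2) ℂ)
    (a : Fin n1 → ℂ) (b : Fin n2 → ℂ) :
    ((Matrix.fromCols N1 N2).submatrix id ⇑(finSumFinEquiv (m := n1) (n := n2)).symm) *ᵥ cmb a b
      = N1 *ᵥ a + N2 *ᵥ b := by
  funext i
  have h := Equiv.sum_comp (finSumFinEquiv (m := n1) (n := n2)).symm
    (fun j' => Matrix.fromCols N1 N2 i j' * Sum.elim a b j')
  calc (((Matrix.fromCols N1 N2).submatrix id ⇑finSumFinEquiv.symm) *ᵥ cmb a b) i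
      = ∑ j, Matrix.fromCols N1 N2 i (finSumFinEquiv.symm j) * Sum.elim a b (finSumFinEquiv.symm j) := rfl
    _ = ∑ j', Matrix.fromCols N1 N2 i j' * Sum.elim a b j' := h
    _ = (Matrix.fromCols N1 N2 *ᵥ Sum.elim a b) i := rfl
    _ = (N1 *ᵥ a + N2 *ᵥ b) i := by rw [Matrix.fromCols_mulVec_sumElim]

-- rank via factorization through a surjective data matrix
lemma rank_via_g {a ι : Type} [Fintype a] [Fintype ι] {T : ℕ}
    (M : Matrix a (Fin T) ℂ) (Wc : Matrix ι (Fin T) ℂ)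
    (g : (ι → ℂ) →ₗ[ℂ] (a → ℂ))
    (hsurj : Function.Surjective Wc.mulVecLin)
    (hcol : ∀ k : Fin T, (fun i => M i k) = g (fun idx => Wc idx k)) :
    M.rank = Module.finrank ℂ (LinearMap.range g) := by
  have hM : M.mulVecLin = g ∘ₗ Wc.mulVecLin := by
    apply LinearMap.ext
    intro v
    have hWv : Wc *ᵥ v = ∑ k, v k • (fun idx => Wc idx k) := by
      funext idx
      simp [Matrix.mulVec, dotProduct, Finset.sum_apply, mul_comm]
    have hMv : M *ᵥ v = ∑ k, v k • (fun i => M i k) := by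
      funext i
      simp [Matrix.mulVec, dotProduct, Finset.sum_apply, mul_comm]
    calc M.mulVecLin v = M *ᵥ v := rfl
      _ = ∑ k, v k • (fun i => M i k) := hMv
      _ = ∑ k, v k • g (fun idx => Wc idx k) := by simp only [hcol]
      _ = g (∑ k, v k • (fun idx => Wc idx k)) := by rw [map_sum]; simp only [LinearMap.map_smul]
      _ = g (Wc *ᵥ v) := by rw [← hWv]
      _ = (g ∘ₗ Wc.mulVecLin) v := rfl
  rw [Matrix.rank, hM, LinearMap.range_comp, LinearMap.range_eq_top.mpr hsurj,
    Submodule.map_top]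

end Stmt16


open Stmt16 in
theorem stmt_16 (n1 n2 s m p q T : ℕ) (hs : 1 ≤ s) (hT : 1 ≤ T)
    (E A : Matrix (Fin (n1 + n2)) (Fin (n1 + n2)) ℝ)
    (B : Matrix (Fin (n1 + n2)) (Fin m) ℝ)
    (F : Matrix (Fin (n1 + n2)) (Fin q) ℝ) (hF : F.rank = q)
    (C : Matrix (Fin p) (Fin (n1 + n2)) ℝ)
    (S P : Matrix (Fin (n1 + n2)) (Fin (n1 + n2)) ℝ)
    (hS : IsUnit S) (hP : IsUnit P)
    (A1 : Matrix (Fin n1) (Fin n1) ℝ) (R : Matrix (Fin n2) (Fin n2) ℝ)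
    (B1 : Matrix (Fin n1) (Fin m) ℝ) (B2 : Matrix (Fin n2) (Fin m) ℝ)
    (F1 : Matrix (Fin n1) (Fin q) ℝ) (F2 : Matrix (Fin n2) (Fin q) ℝ)
    (C1 : Matrix (Fin p) (Fin n1) ℝ) (C2 : Matrix (Fin p) (Fin n2) ℝ)
    (hR : R ^ s = 0)
    (hE : (S * E * P).submatrix ⇑finSumFinEquiv ⇑finSumFinEquiv = Matrix.fromBlocks 1 0 0 R)
    (hA : (S * A * P).submatrix ⇑finSumFinEquiv ⇑finSumFinEquiv = Matrix.fromBlocks A1 0 0 1)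
    (hB : (S * B).submatrix ⇑finSumFinEquiv id = Matrix.fromRows B1 B2)
    (hFdec : (S * F).submatrix ⇑finSumFinEquiv id = Matrix.fromRows F1 F2)
    (hC : (C * P).submatrix id ⇑finSumFinEquiv = Matrix.fromCols C1 C2)
    (ud : ℕ → Fin m → ℝ) (etad : ℕ → Fin q → ℝ)
    (z1d : ℕ → Fin n1 → ℝ) (z2d : ℕ → Fin n2 → ℝ)
    (xd : ℕ → Fin (n1 + n2) → ℝ) (yd : ℕ → Fin p → ℝ)
    (hz1 : ∀ k < T, z1d (k + 1) = A1 *ᵥ z1d k + B1 *ᵥ ud k + F1 *ᵥ etad k)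
    (hz2 : ∀ k ≤ T, z2d k
      = -(∑ j ∈ Finset.range s, (R ^ j *ᵥ (B2 *ᵥ ud (k + j) + F2 *ᵥ etad (k + j)))))
    (hxd : ∀ k ≤ T, xd k = P *ᵥ (fun i => Sum.elim (z1d k) (z2d k) (finSumFinEquiv.symm i)))
    (hyd : ∀ k ≤ T, yd k = C *ᵥ xd k)
    (hPE : (Matrix.of fun (i : Fin n1 ⊕ (Fin (s + 1) × (Fin m ⊕ Fin q))) (k : Fin T) =>
        Sum.elim (z1d (k : ℕ))
          (fun jl => Sum.elim (ud ((k : ℕ) + (jl.1 : ℕ))) (etad ((k : ℕ) + (jl.1 : ℕ))) jl.2)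
          i).rank = n1 + (s + 1) * (m + q))
    (hmatch : (Matrix.fromBlocks E F C 0).rank = (n1 + n2) + q)
    (hdata : ∀ lam : ℂ, 1 ≤ ‖lam‖ →
      (Matrix.fromRows (lam • cmap (histMat T xd 0) - cmap (histMat T xd 1))
        (Matrix.fromRows (cmap (histMat T ud 0))
          (Matrix.fromRows (cmap (histMat T yd 0)) (cmap (histMat T yd 1))))).rank
      = (Matrix.fromRows (cmap (histMat T xd 0))
          (Matrix.fromRows (cmap (histMat T ud 0)) (cmap (histMat T yd 1)))).rank) :
    ∀ lam : ℂ, 1 ≤ ‖lam‖ →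
      (Matrix.fromBlocks (lam • cmap E - cmap A) (-(cmap F)) (cmap C) 0).rank
        = (n1 + n2) + q := by
  intro lam hlam
  classical
  -- complexified matrices
  set Ec := cmap E with hEc
  set Ac := cmap A with hAc
  set Fc := cmap F with hFc
  set Cc := cmap C with hCc
  set Sc := cmap S with hSc
  set Pc := cmap P with hPc
  set A1c := cmap A1 with hA1c
  set Rc := cmap R with hRc
  set B1c := cmap B1 with hB1c
  set B2c := cmap B2 with hB2c
  set F1c := cmap F1 with hF1c
  set F2c := cmap F2 with hF2c
  set C1c := cmap C1 with hC1c
  set C2c := cmap C2 with hC2c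
  -- invertibility over ℂ
  have hScu : IsUnit Sc := by
    have h := hS.map (Complex.ofRealHom.mapMatrix (m := Fin (n1 + n2)))
    rwa [RingHom.mapMatrix_apply, ← cmap_eq_map] at h
  have hPcu : IsUnit Pc := by
    have h := hP.map (Complex.ofRealHom.mapMatrix (m := Fin (n1 + n2)))
    rwa [RingHom.mapMatrix_apply, ← cmap_eq_map] at h
  have hPinj : ∀ v : Fin (n1 + n2) → ℂ, Pc *ᵥ v = 0 → v = 0 := by
    intro v hv
    have hdet := (Matrix.isUnit_iff_isUnit_det Pc).mp hPcu
    calc v = 1 *ᵥ v := (Matrix.one_mulVec v).symm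
      _ = (Pc⁻¹ * Pc) *ᵥ v := by rw [Matrix.nonsing_inv_mul Pc hdet]
      _ = Pc⁻¹ *ᵥ (Pc *ᵥ v) := (Matrix.mulVec_mulVec v Pc⁻¹ Pc).symm
      _ = 0 := by rw [hv, Matrix.mulVec_zero]
  have hSinj : ∀ v : Fin (n1 + n2) → ℂ, Sc *ᵥ v = 0 → v = 0 := by
    intro v hv
    have hdet := (Matrix.isUnit_iff_isUnit_det Sc).mp hScu
    calc v = 1 *ᵥ v := (Matrix.one_mulVec v).symm
      _ = (Sc⁻¹ * Sc) *ᵥ v := by rw [Matrix.nonsing_inv_mul Sc hdet]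
      _ = Sc⁻¹ *ᵥ (Sc *ᵥ v) := (Matrix.mulVec_mulVec v Sc⁻¹ Sc).symm
      _ = 0 := by rw [hv, Matrix.mulVec_zero]
  have hPfac : ∀ v : Fin (n1 + n2) → ℂ, Pc *ᵥ (Pc⁻¹ *ᵥ v) = v := by
    intro v
    have hdet := (Matrix.isUnit_iff_isUnit_det Pc).mp hPcu
    rw [Matrix.mulVec_mulVec, Matrix.mul_nonsing_inv Pc hdet, Matrix.one_mulVec]
  have hRsC : Rc ^ s = 0 := by rw [hRc, ← cmap_pow, hR, cmap_zero]
  -- decomposition identities over ℂ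
  have hE2 : Sc * Ec * Pc
      = (Matrix.fromBlocks 1 0 0 Rc).submatrix ⇑finSumFinEquiv.symm ⇑finSumFinEquiv.symm := by
    have h0 : S * E * P
        = (Matrix.fromBlocks 1 0 0 R).submatrix ⇑finSumFinEquiv.symm ⇑finSumFinEquiv.symm := by
      rw [← hE, Matrix.submatrix_submatrix, Equiv.self_comp_symm, Matrix.submatrix_id_id]
    rw [hSc, hEc, hPc, hRc, ← cmap_mul', ← cmap_mul', h0, cmap_submatrix, cmap_fromBlocks,
      cmap_one', cmap_zero, cmap_zero]
  have hA2 : Sc * Ac * Pc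
      = (Matrix.fromBlocks A1c 0 0 1).submatrix ⇑finSumFinEquiv.symm ⇑finSumFinEquiv.symm := by
    have h0 : S * A * P
        = (Matrix.fromBlocks A1 0 0 1).submatrix ⇑finSumFinEquiv.symm ⇑finSumFinEquiv.symm := by
      rw [← hA, Matrix.submatrix_submatrix, Equiv.self_comp_symm, Matrix.submatrix_id_id]
    rw [hSc, hAc, hPc, hA1c, ← cmap_mul', ← cmap_mul', h0, cmap_submatrix, cmap_fromBlocks,
      cmap_one', cmap_zero, cmap_zero]
  have hF2m : Sc * Fc = (Matrix.fromRows F1c F2c).submatrix ⇑finSumFinEquiv.symm id := by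
    have h0 : S * F = (Matrix.fromRows F1 F2).submatrix ⇑finSumFinEquiv.symm id := by
      rw [← hFdec, Matrix.submatrix_submatrix, Equiv.self_comp_symm]
      simp
    rw [hSc, hFc, hF1c, hF2c, ← cmap_mul', h0, cmap_submatrix, cmap_fromRows]
  have hC2m : Cc * Pc = (Matrix.fromCols C1c C2c).submatrix id ⇑finSumFinEquiv.symm := by
    have h0 : C * P = (Matrix.fromCols C1 C2).submatrix id ⇑finSumFinEquiv.symm := by
      rw [← hC, Matrix.submatrix_submatrix, Equiv.self_comp_symm]
      simp
    rw [hCc, hPc, hC1c, hC2c, ← cmap_mul', h0, cmap_submatrix, cmap_fromColumns]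
  -- mulVec forms of the decomposition
  have hEm : ∀ (a : Fin n1 → ℂ) (b : Fin n2 → ℂ),
      Sc *ᵥ (Ec *ᵥ (Pc *ᵥ cmb a b)) = cmb a (Rc *ᵥ b) := by
    intro a b
    have hh : Sc *ᵥ (Ec *ᵥ (Pc *ᵥ cmb a b)) = (Sc * Ec * Pc) *ᵥ cmb a b := by
      rw [Matrix.mulVec_mulVec, Matrix.mulVec_mulVec]
    rw [hh, hE2, blocksmul]
    simp
  have hAm : ∀ (a : Fin n1 → ℂ) (b : Fin n2 → ℂ),
      Sc *ᵥ (Ac *ᵥ (Pc *ᵥ cmb a b)) = cmb (A1c *ᵥ a) b := by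
    intro a b
    have hh : Sc *ᵥ (Ac *ᵥ (Pc *ᵥ cmb a b)) = (Sc * Ac * Pc) *ᵥ cmb a b := by
      rw [Matrix.mulVec_mulVec, Matrix.mulVec_mulVec]
    rw [hh, hA2, blocksmul]
    simp
  have hFm : ∀ v : Fin q → ℂ, Sc *ᵥ (Fc *ᵥ v) = cmb (F1c *ᵥ v) (F2c *ᵥ v) := by
    intro v
    rw [Matrix.mulVec_mulVec, hF2m, rowsmul]
  have hCm : ∀ (a : Fin n1 → ℂ) (b : Fin n2 → ℂ),
      Cc *ᵥ (Pc *ᵥ cmb a b) = C1c *ᵥ a + C2c *ᵥ b := by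
    intro a b
    rw [Matrix.mulVec_mulVec, hC2m, colsmul]
  -- the [[E,F],[C,0]] kernel is trivial
  have hBigKernel : ∀ (xt : Fin (n1 + n2) → ℂ) (ev : Fin q → ℂ),
      Ec *ᵥ xt + Fc *ᵥ ev = 0 → Cc *ᵥ xt = 0 → xt = 0 ∧ ev = 0 := by
    intro xt ev h1 h2
    have hm' : (Matrix.fromBlocks E F C (0 : Matrix (Fin p) (Fin q) ℝ)).rank
        = Fintype.card (Fin (n1 + n2) ⊕ Fin q) := by
      rw [hmatch]; simp
    have h3 : cmap (Matrix.fromBlocks E F C (0 : Matrix (Fin p) (Fin q) ℝ)) *ᵥ Sum.elim xt ev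
        = 0 := by
      rw [cmap_fromBlocks, cmap_zero, Matrix.fromBlocks_mulVec]
      funext i
      cases i with
      | inl i =>
        simp only [Sum.elim_inl, Pi.zero_apply]
        exact congrFun h1 i
      | inr i =>
        simp only [Sum.elim_inr, Pi.zero_apply, Matrix.zero_mulVec, add_zero]
        exact congrFun h2 i
    have h4 := full_col_rank_complex _ hm' _ h3
    constructor
    · funext i; exact congrFun h4 (Sum.inl i)
    · funext i; exact congrFun h4 (Sum.inr i)
  -- kernel of g2 is contained in kernel of g1
  have hker2 : ∀ w : Idx n1 s m q → ℂ, g2f A1c Rc B1c B2c F1c F2c Pc Cc w = 0 →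
      (g1f A1c Rc B1c B2c F1c F2c Pc Cc lam w = 0
        ∧ xc Rc B2c F2c Pc w = 0 ∧ eN w 0 = 0) := by
    intro w hw
    have hx0 : xc Rc B2c F2c Pc w = 0 := funext fun i => congrFun hw (Sum.inl i)
    have hu0 : uN w 0 = 0 := funext fun i => congrFun hw (Sum.inr (Sum.inl i))
    have hy' : Cc *ᵥ xc' A1c Rc B1c B2c F1c F2c Pc w = 0 :=
      funext fun i => congrFun hw (Sum.inr (Sum.inr i))
    have hx0' : Pc *ᵥ cmb (z1c w) (z2c Rc B2c F2c w) = 0 := hx0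
    have hcmb0 := hPinj _ hx0'
    obtain ⟨hz10, hz20⟩ := cmb_eq_zero_iff.mp hcmb0
    have hz1' : z1c' A1c B1c F1c w = F1c *ᵥ eN w 0 := by
      simp only [z1c']
      rw [hz10, hu0, Matrix.mulVec_zero, Matrix.mulVec_zero, zero_add, zero_add]
    have hRz2' : Rc *ᵥ z2c' Rc B2c F2c w = F2c *ᵥ eN w 0 := by
      rw [key_shift Rc B2c F2c hRsC w, hz20, hu0, Matrix.mulVec_zero, zero_add, zero_add]
    have hE0 : Ec *ᵥ (Pc *ᵥ cmb (-(F1c *ᵥ eN w 0)) (-(z2c' Rc B2c F2c w))) + Fc *ᵥ eN w 0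
        = 0 := by
      apply hSinj
      rw [Matrix.mulVec_add, hEm, hFm, Matrix.mulVec_neg, hRz2', ← cmb_add,
        neg_add_cancel, neg_add_cancel, cmb_zero]
    have hC0 : Cc *ᵥ (Pc *ᵥ cmb (-(F1c *ᵥ eN w 0)) (-(z2c' Rc B2c F2c w))) = 0 := by
      rw [hCm, Matrix.mulVec_neg, Matrix.mulVec_neg]
      have hyy : C1c *ᵥ z1c' A1c B1c F1c w + C2c *ᵥ z2c' Rc B2c F2c w = 0 := by
        rw [← hCm]; exact hy'
      rw [hz1'] at hyy
      rw [← neg_add, hyy, neg_zero]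
    obtain ⟨hxt0, he0⟩ := hBigKernel _ _ hE0 hC0
    have hcmb2 := hPinj _ hxt0
    obtain ⟨-, hnz2'⟩ := cmb_eq_zero_iff.mp hcmb2
    have hz2'0 : z2c' Rc B2c F2c w = 0 := neg_eq_zero.mp hnz2'
    have hx'0 : xc' A1c Rc B1c B2c F1c F2c Pc w = 0 := by
      show Pc *ᵥ cmb (z1c' A1c B1c F1c w) (z2c' Rc B2c F2c w) = 0
      rw [hz1', he0, Matrix.mulVec_zero, hz2'0, cmb_zero, Matrix.mulVec_zero]
    refine ⟨?_, hx0, he0⟩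
    funext idx
    rcases idx with i | (i | (i | i))
    · show (lam • xc Rc B2c F2c Pc w - xc' A1c Rc B1c B2c F1c F2c Pc w) i = 0
      rw [hx0, hx'0]; simp
    · show uN w 0 i = 0
      rw [hu0]; rfl
    · show (Cc *ᵥ xc Rc B2c F2c Pc w) i = 0
      rw [hx0, Matrix.mulVec_zero]; rfl
    · show (Cc *ᵥ xc' A1c Rc B1c B2c F1c F2c Pc w) i = 0
      rw [hx'0, Matrix.mulVec_zero]; rfl
  -- data matrices factor through the PE matrix
  set Wr : Matrix (Idx n1 s m q) (Fin T) ℝ :=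
    Matrix.of fun (i : Fin n1 ⊕ (Fin (s + 1) × (Fin m ⊕ Fin q))) (k : Fin T) =>
      Sum.elim (z1d (k : ℕ))
        (fun jl => Sum.elim (ud ((k : ℕ) + (jl.1 : ℕ))) (etad ((k : ℕ) + (jl.1 : ℕ))) jl.2)
        i with hWr
  have hWsurj : Function.Surjective (cmap Wr).mulVecLin := by
    apply full_row_rank_complex
    rw [hPE]
    simp [mul_comm, mul_add, add_comm]
  have compz1 : ∀ k : Fin T, z1c (rv (fun idx => Wr idx k)) = rv (z1d (k : ℕ)) :=
    fun k => rfl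
  have compu : ∀ (k : Fin T) (j : ℕ), j < s + 1 →
      uN (rv (fun idx => Wr idx k)) j = rv (ud ((k : ℕ) + j)) := by
    intro k j hj
    funext i
    simp only [uN, dif_pos hj]
    rfl
  have compe : ∀ (k : Fin T) (j : ℕ), j < s + 1 →
      eN (rv (fun idx => Wr idx k)) j = rv (etad ((k : ℕ) + j)) := by
    intro k j hj
    funext i
    simp only [eN, dif_pos hj]
    rfl
  have compz2 : ∀ k : Fin T, z2c Rc B2c F2c (rv (fun idx => Wr idx k)) = rv (z2d (k : ℕ)) := by
    intro k
    have hk : (k : ℕ) ≤ T := le_of_lt k.isLt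
    have hterm : ∀ j ∈ Finset.range s,
        Rc ^ j *ᵥ (B2c *ᵥ uN (rv (fun idx => Wr idx k)) j
            + F2c *ᵥ eN (rv (fun idx => Wr idx k)) j)
          = rv (R ^ j *ᵥ (B2 *ᵥ ud ((k : ℕ) + j) + F2 *ᵥ etad ((k : ℕ) + j))) := by
      intro j hj
      have hj' : j < s + 1 := by have := Finset.mem_range.mp hj; omega
      rw [compu k j hj', compe k j hj', hB2c, hF2c, cmap_mulVec_rv, cmap_mulVec_rv, ← rv_add,
        hRc, ← cmap_pow, cmap_mulVec_rv]
    simp only [z2c]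
    rw [Finset.sum_congr rfl hterm, ← rv_sum, ← rv_neg, ← hz2 (k : ℕ) hk]
  have compz2' : ∀ k : Fin T,
      z2c' Rc B2c F2c (rv (fun idx => Wr idx k)) = rv (z2d ((k : ℕ) + 1)) := by
    intro k
    have hk1 : (k : ℕ) + 1 ≤ T := k.isLt
    have hterm : ∀ j ∈ Finset.range s,
        Rc ^ j *ᵥ (B2c *ᵥ uN (rv (fun idx => Wr idx k)) (j + 1)
            + F2c *ᵥ eN (rv (fun idx => Wr idx k)) (j + 1))
          = rv (R ^ j *ᵥ (B2 *ᵥ ud (((k : ℕ) + 1) + j) + F2 *ᵥ etad (((k : ℕ) + 1) + j))) := by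
      intro j hj
      have hj' : j + 1 < s + 1 := by have := Finset.mem_range.mp hj; omega
      have harith : (k : ℕ) + (j + 1) = ((k : ℕ) + 1) + j := by omega
      rw [compu k (j + 1) hj', compe k (j + 1) hj', harith, hB2c, hF2c, cmap_mulVec_rv,
        cmap_mulVec_rv, ← rv_add, hRc, ← cmap_pow, cmap_mulVec_rv]
    simp only [z2c']
    rw [Finset.sum_congr rfl hterm, ← rv_sum, ← rv_neg, ← hz2 ((k : ℕ) + 1) hk1]
  have compz1' : ∀ k : Fin T,
      z1c' A1c B1c F1c (rv (fun idx => Wr idx k)) = rv (z1d ((k : ℕ) + 1)) := by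
    intro k
    simp only [z1c']
    rw [compz1 k, compu k 0 (by omega), compe k 0 (by omega), hA1c, hB1c, hF1c,
      cmap_mulVec_rv, cmap_mulVec_rv, cmap_mulVec_rv, ← rv_add, ← rv_add, Nat.add_zero,
      ← hz1 (k : ℕ) k.isLt]
  have compx : ∀ k : Fin T, xc Rc B2c F2c Pc (rv (fun idx => Wr idx k)) = rv (xd (k : ℕ)) := by
    intro k
    have hk : (k : ℕ) ≤ T := le_of_lt k.isLt
    simp only [xc]
    rw [compz1 k, compz2 k, cmb_rv, hPc, cmap_mulVec_rv, ← hxd (k : ℕ) hk]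
  have compx' : ∀ k : Fin T,
      xc' A1c Rc B1c B2c F1c F2c Pc (rv (fun idx => Wr idx k)) = rv (xd ((k : ℕ) + 1)) := by
    intro k
    simp only [xc']
    rw [compz1' k, compz2' k, cmb_rv, hPc, cmap_mulVec_rv, ← hxd ((k : ℕ) + 1) k.isLt]
  have hwkdef : ∀ k : Fin T, (fun idx => cmap Wr idx k) = rv (fun idx => Wr idx k) :=
    fun k => rfl
  have hcol1 : ∀ k : Fin T,
      (fun i => (Matrix.fromRows (lam • cmap (histMat T xd 0) - cmap (histMat T xd 1))
        (Matrix.fromRows (cmap (histMat T ud 0))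
          (Matrix.fromRows (cmap (histMat T yd 0)) (cmap (histMat T yd 1))))) i k)
      = g1L (s := s) A1c Rc B1c B2c F1c F2c Pc Cc lam (fun idx => cmap Wr idx k) := by
    intro k
    rw [hwkdef k]
    funext idx
    rcases idx with i | (i | (i | i))
    · show (lam • cmap (histMat T xd 0) - cmap (histMat T xd 1)) i k
        = (lam • xc Rc B2c F2c Pc (rv (fun idx => Wr idx k))
            - xc' A1c Rc B1c B2c F1c F2c Pc (rv (fun idx => Wr idx k))) i
      rw [compx k, compx' k]
      simp only [Matrix.sub_apply, Matrix.smul_apply, Pi.sub_apply, Pi.smul_apply,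
        smul_eq_mul, cmap, Matrix.map_apply, histMat, Matrix.of_apply, rv, Nat.add_zero]
    · show cmap (histMat T ud 0) i k = uN (rv (fun idx => Wr idx k)) 0 i
      rw [compu k 0 (by omega)]
      simp only [cmap, Matrix.map_apply, histMat, Matrix.of_apply, rv, Nat.add_zero]
    · show cmap (histMat T yd 0) i k
        = (Cc *ᵥ xc Rc B2c F2c Pc (rv (fun idx => Wr idx k))) i
      rw [compx k, hCc, cmap_mulVec_rv, ← hyd (k : ℕ) (le_of_lt k.isLt)]
      simp only [cmap, Matrix.map_apply, histMat, Matrix.of_apply, rv, Nat.add_zero]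
    · show cmap (histMat T yd 1) i k
        = (Cc *ᵥ xc' A1c Rc B1c B2c F1c F2c Pc (rv (fun idx => Wr idx k))) i
      rw [compx' k, hCc, cmap_mulVec_rv, ← hyd ((k : ℕ) + 1) k.isLt]
      simp only [cmap, Matrix.map_apply, histMat, Matrix.of_apply, rv]
  have hcol2 : ∀ k : Fin T,
      (fun i => (Matrix.fromRows (cmap (histMat T xd 0))
          (Matrix.fromRows (cmap (histMat T ud 0)) (cmap (histMat T yd 1)))) i k)
      = g2L (s := s) A1c Rc B1c B2c F1c F2c Pc Cc (fun idx => cmap Wr idx k) := by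
    intro k
    rw [hwkdef k]
    funext idx
    rcases idx with i | (i | i)
    · show cmap (histMat T xd 0) i k = xc Rc B2c F2c Pc (rv (fun idx => Wr idx k)) i
      rw [compx k]
      simp only [cmap, Matrix.map_apply, histMat, Matrix.of_apply, rv, Nat.add_zero]
    · show cmap (histMat T ud 0) i k = uN (rv (fun idx => Wr idx k)) 0 i
      rw [compu k 0 (by omega)]
      simp only [cmap, Matrix.map_apply, histMat, Matrix.of_apply, rv, Nat.add_zero]
    · show cmap (histMat T yd 1) i k
        = (Cc *ᵥ xc' A1c Rc B1c B2c F1c F2c Pc (rv (fun idx => Wr idx k))) i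
      rw [compx' k, hCc, cmap_mulVec_rv, ← hyd ((k : ℕ) + 1) k.isLt]
      simp only [cmap, Matrix.map_apply, histMat, Matrix.of_apply, rv]
  -- equality of kernel dimensions from the data hypothesis
  have hkereq :
      Module.finrank ℂ (LinearMap.ker (g1L (s := s) A1c Rc B1c B2c F1c F2c Pc Cc lam))
        = Module.finrank ℂ (LinearMap.ker (g2L (s := s) A1c Rc B1c B2c F1c F2c Pc Cc)) := by
    have hr1 := rank_via_g _ (cmap Wr) (g1L (s := s) A1c Rc B1c B2c F1c F2c Pc Cc lam) hWsurj hcol1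
    have hr2 := rank_via_g _ (cmap Wr) (g2L (s := s) A1c Rc B1c B2c F1c F2c Pc Cc) hWsurj hcol2
    have hd := hdata lam hlam
    rw [hr1, hr2] at hd
    have hn1 := LinearMap.finrank_range_add_finrank_ker (g1L (s := s) A1c Rc B1c B2c F1c F2c Pc Cc lam)
    have hn2 := LinearMap.finrank_range_add_finrank_ker (g2L (s := s) A1c Rc B1c B2c F1c F2c Pc Cc)
    omega
  -- main step: pencil kernel is trivial
  have hker : ∀ v : (Fin (n1 + n2) ⊕ Fin q) → ℂ,
      (Matrix.fromBlocks (lam • Ec - Ac) (-Fc) Cc 0) *ᵥ v = 0 → v = 0 := by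
    intro v hv
    by_contra hv0
    set x := fun i => v (Sum.inl i) with hxdef
    set ek := fun i => v (Sum.inr i) with hekdef
    have hvelim : v = Sum.elim x ek := by funext idx; cases idx <;> rfl
    have hv' := hv
    rw [hvelim, Matrix.fromBlocks_mulVec] at hv'
    have hrow1 : (lam • Ec - Ac) *ᵥ x + (-Fc) *ᵥ ek = 0 :=
      funext fun i => congrFun hv' (Sum.inl i)
    have hrow2 : Cc *ᵥ x = 0 := by
      have h : Cc *ᵥ x + (0 : Matrix (Fin p) (Fin q) ℂ) *ᵥ ek = 0 :=
        funext fun i => congrFun hv' (Sum.inr i)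
      rwa [Matrix.zero_mulVec, add_zero] at h
    have hpencil : (lam • Ec - Ac) *ᵥ x = Fc *ᵥ ek := by
      have h := hrow1
      rw [Matrix.neg_mulVec, ← sub_eq_add_neg] at h
      exact sub_eq_zero.mp h
    -- coordinates
    set y := Pc⁻¹ *ᵥ x with hydef
    set z1k := fun i => y (finSumFinEquiv (Sum.inl i)) with hz1kdef
    set z2k := fun i => y (finSumFinEquiv (Sum.inr i)) with hz2kdef
    have hcmby : cmb z1k z2k = y := by
      funext i
      simp only [cmb]
      rcases hsi : finSumFinEquiv.symm i with j | j
      · have hji : finSumFinEquiv (Sum.inl j) = i := by rw [← hsi, Equiv.apply_symm_apply]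
        simp only [Sum.elim_inl, hz1kdef, hji]
      · have hji : finSumFinEquiv (Sum.inr j) = i := by rw [← hsi, Equiv.apply_symm_apply]
        simp only [Sum.elim_inr, hz2kdef, hji]
    have hxPc : x = Pc *ᵥ cmb z1k z2k := by rw [hcmby, hydef]; exact (hPfac x).symm
    -- transformed pencil equations
    have hSs : Sc *ᵥ ((lam • Ec - Ac) *ᵥ x) = cmb (F1c *ᵥ ek) (F2c *ᵥ ek) := by
      rw [hpencil, hFm]
    have hLHS : Sc *ᵥ ((lam • Ec - Ac) *ᵥ x)
        = cmb (lam • z1k - A1c *ᵥ z1k) (lam • (Rc *ᵥ z2k) - z2k) := by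
      rw [Matrix.sub_mulVec, Matrix.smul_mulVec, Matrix.mulVec_sub, Matrix.mulVec_smul,
        hxPc, hEm, hAm, ← cmb_smul, ← cmb_sub]
    have hcmbeq := hLHS.symm.trans hSs
    obtain ⟨e1, e2⟩ := cmb_inj hcmbeq
    have e3 : C1c *ᵥ z1k + C2c *ᵥ z2k = 0 := by
      rw [← hCm z1k z2k, ← hxPc]; exact hrow2
    have hz2keq := unroll Rc lam hRsC z2k (F2c *ᵥ ek) e2
    -- the witness vector
    set ws : Idx n1 s m q → ℂ := Sum.elim z1k
      (fun jl => Sum.elim (fun _ => (0 : ℂ)) (fun i => lam ^ (jl.1 : ℕ) * ek i) jl.2)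
      with hwsdef
    have hustar : ∀ j : ℕ, uN ws j = 0 := by
      intro j
      by_cases hj : j < s + 1
      · funext i; simp only [uN, dif_pos hj, hwsdef]; rfl
      · funext i; simp only [uN, dif_neg hj]
    have hestar : ∀ (j : ℕ), j < s + 1 → eN ws j = lam ^ j • ek := by
      intro j hj
      funext i
      simp only [eN, dif_pos hj, hwsdef]
      simp [smul_eq_mul]
    have hz2ws : z2c Rc B2c F2c ws = z2k := by
      have hterm : ∀ j ∈ Finset.range s,
          Rc ^ j *ᵥ (B2c *ᵥ uN ws j + F2c *ᵥ eN ws j)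
            = lam ^ j • (Rc ^ j *ᵥ (F2c *ᵥ ek)) := by
        intro j hj
        have hj' : j < s + 1 := by have := Finset.mem_range.mp hj; omega
        rw [hustar j, hestar j hj', Matrix.mulVec_zero, zero_add, Matrix.mulVec_smul,
          Matrix.mulVec_smul]
      simp only [z2c]
      rw [Finset.sum_congr rfl hterm, ← hz2keq]
    have hz2'ws : z2c' Rc B2c F2c ws = lam • z2k := by
      have hterm : ∀ j ∈ Finset.range s,
          Rc ^ j *ᵥ (B2c *ᵥ uN ws (j + 1) + F2c *ᵥ eN ws (j + 1))
            = lam • (lam ^ j • (Rc ^ j *ᵥ (F2c *ᵥ ek))) := by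
        intro j hj
        have hj' : j + 1 < s + 1 := by have := Finset.mem_range.mp hj; omega
        rw [hustar (j + 1), hestar (j + 1) hj', Matrix.mulVec_zero, zero_add,
          Matrix.mulVec_smul, Matrix.mulVec_smul, pow_succ', mul_smul]
      simp only [z2c']
      rw [Finset.sum_congr rfl hterm, ← Finset.smul_sum, ← smul_neg, ← hz2keq]
    have hz1'ws : z1c' A1c B1c F1c ws = lam • z1k := by
      show A1c *ᵥ z1c ws + B1c *ᵥ uN ws 0 + F1c *ᵥ eN ws 0 = lam • z1k
      rw [hustar 0, hestar 0 (by omega), Matrix.mulVec_zero, add_zero, pow_zero, one_smul]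
      show A1c *ᵥ z1k + F1c *ᵥ ek = lam • z1k
      rw [← e1]
      abel
    have hxws : xc Rc B2c F2c Pc ws = x := by
      show Pc *ᵥ cmb (z1c ws) (z2c Rc B2c F2c ws) = x
      rw [hz2ws]
      rw [show z1c ws = z1k from rfl, ← hxPc]
    have hx'ws : xc' A1c Rc B1c B2c F1c F2c Pc ws = lam • x := by
      show Pc *ᵥ cmb (z1c' A1c B1c F1c ws) (z2c' Rc B2c F2c ws) = lam • x
      rw [hz1'ws, hz2'ws, cmb_smul, Matrix.mulVec_smul, ← hxPc]
    -- ws is in ker g1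
    have hg1ws : g1f A1c Rc B1c B2c F1c F2c Pc Cc lam ws = 0 := by
      funext idx
      rcases idx with i | (i | (i | i))
      · show (lam • xc Rc B2c F2c Pc ws - xc' A1c Rc B1c B2c F1c F2c Pc ws) i = 0
        rw [hxws, hx'ws]; simp
      · show uN ws 0 i = 0
        rw [hustar 0]; rfl
      · show (Cc *ᵥ xc Rc B2c F2c Pc ws) i = 0
        rw [hxws, hrow2]; rfl
      · show (Cc *ᵥ xc' A1c Rc B1c B2c F1c F2c Pc ws) i = 0
        rw [hx'ws, Matrix.mulVec_smul, hrow2]; simp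
    -- ws is not in ker g2
    have hg2ws : g2f A1c Rc B1c B2c F1c F2c Pc Cc ws ≠ 0 := by
      intro h0
      obtain ⟨-, hxc0, he0⟩ := hker2 ws h0
      have hx0 : x = 0 := by rw [← hxws]; exact hxc0
      have hek0 : ek = 0 := by
        have h1 := hestar 0 (by omega)
        rw [pow_zero, one_smul] at h1
        rw [← h1]; exact he0
      apply hv0
      rw [hvelim, hx0, hek0]
      funext idx; cases idx <;> rfl
    -- strict inclusion of kernels
    have hle : LinearMap.ker (g2L (s := s) A1c Rc B1c B2c F1c F2c Pc Cc)
        ≤ LinearMap.ker (g1L (s := s) A1c Rc B1c B2c F1c F2c Pc Cc lam) := by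
      intro w hw
      exact LinearMap.mem_ker.mpr ((hker2 w (LinearMap.mem_ker.mp hw)).1)
    have hwsin : ws ∈ LinearMap.ker (g1L (s := s) A1c Rc B1c B2c F1c F2c Pc Cc lam) :=
      LinearMap.mem_ker.mpr hg1ws
    have hwsnotin : ws ∉ LinearMap.ker (g2L (s := s) A1c Rc B1c B2c F1c F2c Pc Cc) := by
      intro hmem
      exact hg2ws (LinearMap.mem_ker.mp hmem)
    have hlt : LinearMap.ker (g2L (s := s) A1c Rc B1c B2c F1c F2c Pc Cc)
        < LinearMap.ker (g1L (s := s) A1c Rc B1c B2c F1c F2c Pc Cc lam) :=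
      lt_of_le_of_ne hle (fun hh => hwsnotin (by rw [hh]; exact hwsin))
    have hfr := Submodule.finrank_lt_finrank_of_lt hlt
    omega
  -- conclude the rank statement
  have hkerbot : LinearMap.ker (Matrix.fromBlocks (lam • Ec - Ac) (-Fc) Cc
      (0 : Matrix (Fin p) (Fin q) ℂ)).mulVecLin = ⊥ :=
    LinearMap.ker_eq_bot'.mpr (fun v hv => hker v hv)
  have h1 := LinearMap.finrank_range_add_finrank_ker
    (Matrix.fromBlocks (lam • Ec - Ac) (-Fc) Cc (0 : Matrix (Fin p) (Fin q) ℂ)).mulVecLin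
  rw [hkerbot, finrank_bot] at h1
  have h2 : Module.finrank ℂ (((Fin (n1 + n2)) ⊕ (Fin q)) → ℂ) = (n1 + n2) + q := by
    rw [Module.finrank_pi]
    simp
  rw [h2] at h1
  rw [Matrix.rank]
  omega
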